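/- Let n be odd, θ ~ Bernoulli(p) with p ∈ [1/2, 1), and let Y_1,…,Y_n be conditionally i.i.d. given θ with Pr(Y_k = 1 | θ = 1) = 1−α and Pr(Y_k = 1 | θ = 0) = α, where α ∈ (0, 1/2), (1−α)(1−p) > αp, and p < P_c(θ|Y^n). Then P_c(θ|Y^n) = (1−α)^n Σ_{k=0}^{(n−1)/2} C(n,k)(α/(1−α))^k =: T, and there exists ε_L < T such that for every ε ∈ [ε_L, T]: max{P_c(Y^n|Z^n) : P_{Z^n|Y^n} a channel with output alphabet {0,1}^n, θ–Y^n–Z^n a Markov chain, P_c(θ|Z^n) ≤ ε} = 1 − ζ(ε)·(p(1−α)^n + (1−p)α^n), where ζ(ε) := (T − ε)/(p(1−α)^n − (1−p)α^n). Moreover, the maximum is attained by the 2^n-ary Z-channel that maps every y^n ≠ (1,…,1) to itself with probability 1 and maps (1,…,1) to (0,…,0) with probability ζ(ε) and to (1,…,1) with probability 1 − ζ(ε). -/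

import Mathlib

open Finset

/-- `bern p b = p` if `b = true`, and `1 - p` otherwise. -/
noncomputable def bern (p : ℝ) (b : Bool) : ℝ := if b then p else 1 - p

/-- Joint pmf of `(X^n, Y^n)` where `X_1,…,X_n` are i.i.d. `Bernoulli(p)` and
`Y_k = X_k ⊕ V_k` with `V_1,…,V_n` i.i.d. `Bernoulli(α)` independent of `X^n`. -/
noncomputable def jointIID (n : ℕ) (p α : ℝ) :
    (Fin n → Bool) → (Fin n → Bool) → ℝ :=
  fun x y => ∏ k, bern p (x k) * bern α (xor (x k) (y k))

/-- `F` is a channel (row-stochastic matrix) on a finite alphabet. -/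
def IsChannel {V : Type*} [Fintype V] (F : V → V → ℝ) : Prop :=
  (∀ y z, 0 ≤ F y z) ∧ ∀ y, ∑ z, F y z = 1

/-- `P_c(X|Z)` where `Z` is the output of the channel `F` applied to `Y` and
`X – Y – Z` is a Markov chain, for joint pmf `P` of `(X,Y)`. -/
noncomputable def pcXZ {X V : Type*} [Fintype X] [Fintype V] [Nonempty X]
    (P : X → V → ℝ) (F : V → V → ℝ) : ℝ :=
  ∑ z, ⨆ x, ∑ y, P x y * F y z

/-- `P_c(Y|Z)` where `Z` is the output of the channel `F` applied to `Y`. -/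
noncomputable def pcYZ {X V : Type*} [Fintype X] [Fintype V] [Nonempty V]
    (P : X → V → ℝ) (F : V → V → ℝ) : ℝ :=
  ∑ z, ⨆ y, (∑ x, P x y) * F y z

/-- The Z-channel from `y0` to `z0` with crossover probability `ζ`: every `y ≠ y0` is
mapped to itself with probability `1`, while `y0` is mapped to `z0` with probability
`ζ` and to itself with probability `1 − ζ`. -/
noncomputable def Zch {V : Type*} [DecidableEq V] (y0 z0 : V) (ζ : ℝ) : V → V → ℝ :=
  fun y z =>
    if y = y0 then (if z = z0 then ζ else if z = y0 then 1 - ζ else 0)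
    else (if z = y then 1 else 0)

/-- Joint pmf of `(θ, Y^n)` where `θ ~ Bernoulli(p)` and, given `θ`, the `Y_k` are
i.i.d. with `Pr(Y_k = 1 | θ = 1) = 1 − α` and `Pr(Y_k = 1 | θ = 0) = α`. -/
noncomputable def jointTheta (n : ℕ) (p α : ℝ) : Bool → (Fin n → Bool) → ℝ :=
  fun t y => bern p t * ∏ k, bern (if t then 1 - α else α) (y k)

/-! ### Auxiliary lemmas -/

lemma bsup (f : Bool → ℝ) : (⨆ b, f b) = max (f true) (f false) := by
  apply le_antisymm
  · exact ciSup_le (fun b => by cases b <;> simp)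
  · exact max_le (le_ciSup (Set.finite_range f).bddAbove true)
      (le_ciSup (Set.finite_range f).bddAbove false)

lemma isup_eq {V : Type*} [Fintype V] [Nonempty V] (f : V → ℝ) (v : V)
    (h : ∀ u, f u ≤ f v) : (⨆ u, f u) = f v :=
  le_antisymm (ciSup_le h) (le_ciSup (Set.finite_range f).bddAbove v)

/-- weight of a boolean vector -/
def wt {N : ℕ} (y : Fin N → Bool) : ℕ := ∑ i, if y i then 1 else 0

lemma wt_le {N : ℕ} (y : Fin N → Bool) : wt y ≤ N := by
  have : wt y ≤ ∑ _i : Fin N, 1 := Finset.sum_le_sum (fun i _ => by split <;> omega)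
  simpa using this

lemma wt_cons {N : ℕ} (b : Bool) (y : Fin N → Bool) :
    wt (Fin.cons b y) = (if b then 1 else 0) + wt y := by
  unfold wt; rw [Fin.sum_univ_succ]; simp

lemma wt_all_true {N : ℕ} : wt (fun _ : Fin N => true) = N := by simp [wt]

lemma wt_all_false {N : ℕ} : wt (fun _ : Fin N => false) = 0 := by simp [wt]

lemma sum_wt (N : ℕ) (g : ℕ → ℝ) :
    ∑ y : Fin N → Bool, g (wt y) = ∑ k ∈ range (N+1), (N.choose k : ℝ) * g k := by
  induction N generalizing g with
  | zero => simp [wt]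
  | succ N ih =>
    have e1 : ∑ y : Fin (N+1) → Bool, g (wt y)
        = ∑ p : Bool × (Fin N → Bool), g (wt (Fin.cons p.1 p.2)) :=
      (Fintype.sum_equiv (Fin.consEquiv (fun _ => Bool))
        (fun p => g (wt (Fin.cons p.1 p.2))) (fun y => g (wt y))
        (fun p => by cases p; rfl)).symm
    rw [e1, Fintype.sum_prod_type]
    simp only [wt_cons]
    rw [Fintype.sum_bool]
    norm_num
    rw [ih g, ih (fun k => g (1 + k))]
    rw [Finset.sum_range_succ' (fun k => ((N+1).choose k : ℝ) * g k) (N+1)]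
    simp only [Nat.choose_succ_succ, Nat.choose_zero_right, Nat.cast_add, Nat.cast_one]
    rw [Finset.sum_range_succ (fun k => (N.choose k : ℝ) * g (1+k)) N]
    have : (N.choose (N+1) : ℝ) = 0 := by simp [Nat.choose_eq_zero_of_lt]
    simp only [add_mul, Finset.sum_add_distrib]
    rw [Finset.sum_range_succ (fun k => (N.choose (k+1) : ℝ) * g (k+1)) N]
    rw [Finset.sum_range_succ' (fun k => (N.choose k : ℝ) * g k) N] at *
    simp only [Nat.choose_zero_right, Nat.cast_one, this, zero_mul, add_zero, one_mul]
    have h2 : ∀ k, (1:ℕ) + k = k + 1 := fun k => by omega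
    simp only [h2]
    rw [Finset.sum_range_succ (fun k => (N.choose k : ℝ) * g (k+1)) N]
    ring

lemma prod_bern {N : ℕ} (q : ℝ) (y : Fin N → Bool) :
    ∏ k, bern q (y k) = q ^ wt y * (1-q) ^ (N - wt y) := by
  show (∏ k, if y k then q else 1-q) = _
  unfold wt
  rw [Finset.prod_ite, Finset.prod_const, Finset.prod_const, ← Finset.card_filter]
  congr 2
  have := Finset.card_filter_add_card_filter_not
    (s := (univ : Finset (Fin N))) (p := fun i => y i = true)
  simp only [Finset.card_univ, Fintype.card_fin] at this
  show _ = N - #(filter (fun i => y i = true) univ)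
  omega

lemma jt_true {n : ℕ} {p α : ℝ} (y : Fin n → Bool) :
    jointTheta n p α true y = p * ((1-α) ^ wt y * α ^ (n - wt y)) := by
  unfold jointTheta
  rw [if_pos rfl, prod_bern]
  show bern p true * _ = _
  unfold bern
  rw [if_pos rfl, sub_sub_cancel]

lemma jt_false {n : ℕ} {p α : ℝ} (y : Fin n → Bool) :
    jointTheta n p α false y = (1-p) * (α ^ wt y * (1-α) ^ (n - wt y)) := by
  unfold jointTheta
  rw [if_neg (by simp), prod_bern]
  rfl

section Key
variable {m w : ℕ} {p α : ℝ}

lemma keyineq (hp : 1/2 ≤ p) (hp1 : p < 1) (h0 : 0 < α) (hh : α < 1/2) (hw : w ≤ 2*m+1) :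
    ((p*((1-α)^w * α^(2*m+1-w)) - (1-p)*(α^w * (1-α)^(2*m+1-w)))
        * (p*(1-α)^(2*m+1) + (1-p)*α^(2*m+1))
      ≤ (p*((1-α)^w * α^(2*m+1-w)) + (1-p)*(α^w * (1-α)^(2*m+1-w)))
        * (p*(1-α)^(2*m+1) - (1-p)*α^(2*m+1))) ∧
    (((1-p)*(α^w * (1-α)^(2*m+1-w)) - p*((1-α)^w * α^(2*m+1-w)))
        * (p*(1-α)^(2*m+1) + (1-p)*α^(2*m+1))
      ≤ (p*((1-α)^w * α^(2*m+1-w)) + (1-p)*(α^w * (1-α)^(2*m+1-w)))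
        * (p*(1-α)^(2*m+1) - (1-p)*α^(2*m+1))) := by
  obtain ⟨j, hj⟩ : ∃ j, 2*m+1 = w + j := ⟨2*m+1-w, by omega⟩
  rw [hj, Nat.add_sub_cancel_left, pow_add, pow_add]
  have ha : 0 < 1 - α := by linarith
  have hba : α ≤ 1 - α := by linarith
  have hq : 1 - p ≤ p := by linarith
  have hq0 : 0 < 1 - p := by linarith
  have hp0 : 0 < p := by linarith
  have h1 : α^j ≤ (1-α)^j := pow_le_pow_left₀ h0.le hba j
  have h2 : α^w ≤ (1-α)^w := pow_le_pow_left₀ h0.le hba w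
  have hA : (1-p)*α^w ≤ p*(1-α)^w :=
    mul_le_mul hq h2 (le_of_lt (pow_pos h0 w)) hp0.le
  constructor
  · -- reduces to u*v_n ≤ v*u_n
    have hint : (p*(1-α)^w*((1-p)*α^w)) * (α^j*α^j) ≤ (p*(1-α)^w*((1-p)*α^w)) * ((1-α)^j*(1-α)^j) := by
      apply mul_le_mul_of_nonneg_left (mul_le_mul h1 h1 (by positivity) (by positivity))
      positivity
    nlinarith [hint]
  · -- reduces to v*v_n ≤ u*u_n
    have hint : (((1-p)*α^w) * ((1-p)*α^w)) * ((1-α)^j*α^j) ≤ ((p*(1-α)^w) * (p*(1-α)^w)) * ((1-α)^j*α^j) := by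
      apply mul_le_mul_of_nonneg_right (mul_le_mul hA hA (by positivity) (by positivity))
      positivity
    nlinarith [hint]

lemma dpos (hp : 1/2 ≤ p) (hp1 : p < 1) (h0 : 0 < α) (hh : α < 1/2) (n : ℕ) (hn : 0 < n) :
    (1-p)*α^n < p*(1-α)^n := by
  have ha : 0 < 1 - α := by linarith
  have hba : α < 1 - α := by linarith
  have hp0 : 0 < p := by linarith
  have h1 : α^n < (1-α)^n := pow_lt_pow_left₀ hba h0.le (by omega)
  nlinarith [pow_pos h0 n]

lemma cmp_low (hp : 1/2 ≤ p) (hp1 : p < 1) (h0 : 0 < α) (hh : α < 1/2)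
    (hnt : α * p < (1 - α) * (1 - p)) (hw : w ≤ m) :
    p*((1-α)^w * α^(2*m+1-w)) ≤ (1-p)*(α^w * (1-α)^(2*m+1-w)) := by
  obtain ⟨r, hr⟩ : ∃ r, 2*m+1-w = w + (r+1) := ⟨2*m-2*w, by omega⟩
  rw [hr]
  simp only [pow_add, pow_one]
  have ha : 0 < 1 - α := by linarith
  have hba : α ≤ 1 - α := by linarith
  have hkey : p * (α^r*α) ≤ (1-p)*((1-α)^r*(1-α)) := by
    have t1 : (α*p)*α^r ≤ ((1-α)*(1-p))*α^r :=
      mul_le_mul_of_nonneg_right hnt.le (pow_pos h0 r).le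
    have t2 : ((1-α)*(1-p))*α^r ≤ ((1-α)*(1-p))*(1-α)^r :=
      mul_le_mul_of_nonneg_left (pow_le_pow_left₀ h0.le hba r) (by nlinarith)
    nlinarith [t1, t2]
  nlinarith [mul_le_mul_of_nonneg_left hkey (show (0:ℝ) ≤ (1-α)^w*α^w by positivity)]

lemma cmp_high (hp : 1/2 ≤ p) (hp1 : p < 1) (h0 : 0 < α) (hh : α < 1/2)
    (hw1 : m+1 ≤ w) (hw2 : w ≤ 2*m+1) :
    (1-p)*(α^w * (1-α)^(2*m+1-w)) ≤ p*((1-α)^w * α^(2*m+1-w)) := by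
  obtain ⟨j, s, hw', hj⟩ : ∃ j s, w = j + s ∧ 2*m+1-w = j :=
    ⟨2*m+1-w, 2*w-(2*m+1), by omega, rfl⟩
  rw [hj, hw', pow_add, pow_add]
  have ha : 0 < 1 - α := by linarith
  have hba : α ≤ 1 - α := by linarith
  have hq : 1 - p ≤ p := by linarith
  have hkey : (1-p)*α^s ≤ p*(1-α)^s := by
    nlinarith [pow_le_pow_left₀ h0.le hba s, pow_pos h0 s]
  nlinarith [mul_le_mul_of_nonneg_left hkey
    (show (0:ℝ) ≤ (1-α)^j*α^j by positivity)]

end Key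

section Tval
variable {m : ℕ} {p α : ℝ}

lemma sup_jt (hp : 1/2 ≤ p) (hp1 : p < 1) (h0 : 0 < α) (hh : α < 1/2)
    (hnt : α * p < (1 - α) * (1 - p)) (y : Fin (2*m+1) → Bool) :
    (⨆ t, jointTheta (2*m+1) p α t y) =
      if wt y ≤ m then (1-p)*(α^(wt y) * (1-α)^(2*m+1-wt y))
      else p*((1-α)^(wt y) * α^(2*m+1-wt y)) := by
  rw [bsup, jt_true, jt_false]
  by_cases hw : wt y ≤ m
  · rw [if_pos hw, max_eq_right (cmp_low hp hp1 h0 hh hnt hw)]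
  · rw [if_neg hw, max_eq_left (cmp_high hp hp1 h0 hh (by omega) (wt_le y))]

lemma Tval (hp : 1/2 ≤ p) (hp1 : p < 1) (h0 : 0 < α) (hh : α < 1/2)
    (hnt : α * p < (1 - α) * (1 - p)) :
    ∑ y : Fin (2*m+1) → Bool, (⨆ t, jointTheta (2*m+1) p α t y) =
      ∑ k ∈ range (m+1), ((2*m+1).choose k : ℝ) * (α^k * (1-α)^(2*m+1-k)) := by
  have e1 : ∑ y : Fin (2*m+1) → Bool, (⨆ t, jointTheta (2*m+1) p α t y)
      = ∑ y : Fin (2*m+1) → Bool,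
          (fun k : ℕ => if k ≤ m then (1-p)*(α^k * (1-α)^(2*m+1-k))
            else p*((1-α)^k * α^(2*m+1-k))) (wt y) :=
    Finset.sum_congr rfl (fun y _ => sup_jt hp hp1 h0 hh hnt y)
  rw [e1, sum_wt (2*m+1) (fun k : ℕ => if k ≤ m then (1-p)*(α^k * (1-α)^(2*m+1-k))
            else p*((1-α)^k * α^(2*m+1-k)))]
  rw [show 2*m+1+1 = 2*(m+1) by ring, Finset.range_eq_Ico, ← Finset.sum_Ico_consecutive _
    (Nat.zero_le (m+1)) (show m+1 ≤ 2*(m+1) by omega), ← Finset.range_eq_Ico]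
  have e2 : ∑ k ∈ range (m+1), ((2*m+1).choose k : ℝ) *
      (if k ≤ m then (1-p)*(α^k * (1-α)^(2*m+1-k)) else p*((1-α)^k * α^(2*m+1-k)))
      = (1-p) * ∑ k ∈ range (m+1), ((2*m+1).choose k : ℝ) * (α^k * (1-α)^(2*m+1-k)) := by
    rw [Finset.mul_sum]
    refine Finset.sum_congr rfl (fun k hk => ?_)
    rw [if_pos (by simp at hk; omega)]
    ring
  have e3 : ∑ k ∈ Ico (m+1) (2*(m+1)), ((2*m+1).choose k : ℝ) *
      (if k ≤ m then (1-p)*(α^k * (1-α)^(2*m+1-k)) else p*((1-α)^k * α^(2*m+1-k)))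
      = p * ∑ k ∈ range (m+1), ((2*m+1).choose k : ℝ) * (α^k * (1-α)^(2*m+1-k)) := by
    rw [Finset.mul_sum]
    refine Finset.sum_nbij' (i := fun k => 2*m+1-k) (j := fun k => 2*m+1-k)
      (fun k hk => ?_) (fun k hk => ?_) (fun k hk => ?_) (fun k hk => ?_) (fun k hk => ?_)
    · simp only [Finset.mem_Ico] at hk
      simp only [Finset.mem_range]; omega
    · simp only [Finset.mem_range] at hk
      simp only [Finset.mem_Ico]; omega
    · simp only [Finset.mem_Ico] at hk
      show 2*m+1-(2*m+1-k) = k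
      omega
    · simp only [Finset.mem_range] at hk
      show 2*m+1-(2*m+1-k) = k
      omega
    · simp only [Finset.mem_Ico] at hk
      rw [if_neg (by omega), Nat.choose_symm (by omega)]
      have e : 2*m+1-(2*m+1-k) = k := by omega
      rw [e]
      ring
  rw [e2, e3]
  ring

lemma jt_nonneg (hp : 1/2 ≤ p) (hp1 : p < 1) (h0 : 0 < α) (hh : α < 1/2)
    (t : Bool) (y : Fin (2*m+1) → Bool) : 0 ≤ jointTheta (2*m+1) p α t y := by
  have h2 : (0:ℝ) ≤ 1 - α := by linarith
  have h3 : (0:ℝ) ≤ p := by linarith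
  have h4 : (0:ℝ) ≤ 1 - p := by linarith
  cases t
  · rw [jt_false]
    exact mul_nonneg h4 (mul_nonneg (pow_nonneg h0.le _) (pow_nonneg h2 _))
  · rw [jt_true]
    exact mul_nonneg h3 (mul_nonneg (pow_nonneg h2 _) (pow_nonneg h0.le _))

lemma sum_QY (hp : 1/2 ≤ p) (hp1 : p < 1) (h0 : 0 < α) (hh : α < 1/2) :
    ∑ y : Fin (2*m+1) → Bool, (∑ t, jointTheta (2*m+1) p α t y) = 1 := by
  have e1 : ∀ y : Fin (2*m+1) → Bool, (∑ t, jointTheta (2*m+1) p α t y)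
      = (fun k : ℕ => p*((1-α)^k * α^(2*m+1-k)) + (1-p)*(α^k * (1-α)^(2*m+1-k))) (wt y) := by
    intro y
    rw [Fintype.sum_bool, jt_true, jt_false]
  rw [Finset.sum_congr rfl (fun y _ => e1 y), sum_wt (2*m+1)
    (fun k : ℕ => p*((1-α)^k * α^(2*m+1-k)) + (1-p)*(α^k * (1-α)^(2*m+1-k)))]
  have hb : ∀ x y : ℝ, ∑ k ∈ range (2*m+1+1), ((2*m+1).choose k : ℝ) * (x^k * y^(2*m+1-k))
      = (x+y)^(2*m+1) := by
    intro x y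
    rw [add_pow]
    exact Finset.sum_congr rfl (fun k _ => by ring)
  have expand : ∑ k ∈ range (2*m+1+1), ((2*m+1).choose k : ℝ) *
      (p*((1-α)^k * α^(2*m+1-k)) + (1-p)*(α^k * (1-α)^(2*m+1-k)))
      = p * ∑ k ∈ range (2*m+1+1), ((2*m+1).choose k : ℝ) * ((1-α)^k * α^(2*m+1-k))
        + (1-p) * ∑ k ∈ range (2*m+1+1), ((2*m+1).choose k : ℝ) * (α^k * (1-α)^(2*m+1-k)) := by
    rw [Finset.mul_sum, Finset.mul_sum, ← Finset.sum_add_distrib]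
    exact Finset.sum_congr rfl (fun k _ => by ring)
  rw [expand, hb, hb]
  norm_num

end Tval

section Zchan

lemma sum_one_pt {V : Type*} [Fintype V] [DecidableEq V] (f g : V → ℝ) (c : V)
    (hgen : ∀ z, z ≠ c → f z = g z) :
    ∑ z, f z = (∑ z, g z) + (f c - g c) := by
  have e : ∀ z, f z - g z = (if z = c then f c - g c else 0) := by
    intro z
    by_cases h0 : z = c
    · subst h0; rw [if_pos rfl]
    · rw [if_neg h0, hgen z h0]; ring
  have h2 : ∑ z, (f z - g z) = f c - g c := by
    rw [Finset.sum_congr rfl (fun z _ => e z), Finset.sum_ite_eq' univ c]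
    simp
  rw [Finset.sum_sub_distrib] at h2
  linarith

lemma sum_two_pt {V : Type*} [Fintype V] [DecidableEq V] (f g : V → ℝ) (c0 c1 : V)
    (h : c0 ≠ c1) (hgen : ∀ z, z ≠ c0 → z ≠ c1 → f z = g z) :
    ∑ z, f z = (∑ z, g z) + (f c0 - g c0) + (f c1 - g c1) := by
  have e : ∀ z, f z - g z
      = (if z = c0 then f c0 - g c0 else 0) + (if z = c1 then f c1 - g c1 else 0) := by
    intro z
    by_cases h0 : z = c0
    · subst h0; rw [if_pos rfl, if_neg h]; ring
    · by_cases h1 : z = c1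
      · subst h1; rw [if_neg h0, if_pos rfl]; ring
      · rw [if_neg h0, if_neg h1, hgen z h0 h1]; ring
  have h2 : ∑ z, (f z - g z) = (f c0 - g c0) + (f c1 - g c1) := by
    rw [Finset.sum_congr rfl (fun z _ => e z), Finset.sum_add_distrib,
      Finset.sum_ite_eq' univ c0, Finset.sum_ite_eq' univ c1]
    simp
  rw [Finset.sum_sub_distrib] at h2
  linarith

lemma Zch_isChannel {V : Type*} [Fintype V] [DecidableEq V] (y0 z0 : V) (hy : z0 ≠ y0)
    (ζ : ℝ) (h0 : 0 ≤ ζ) (h1 : ζ ≤ 1) : IsChannel (Zch y0 z0 ζ) := by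
  constructor
  · intro y z; unfold Zch; split_ifs <;> linarith
  · intro y
    unfold Zch
    by_cases hy1 : y = y0
    · simp only [if_pos hy1]
      have e : ∀ z : V, (if z = z0 then ζ else if z = y0 then 1-ζ else 0)
          = (if z = z0 then ζ else 0) + (if z = y0 then 1-ζ else 0) := by
        intro z
        by_cases hz : z = z0
        · subst hz; rw [if_pos rfl, if_pos rfl, if_neg hy]; ring
        · rw [if_neg hz, if_neg hz]; ring
      rw [Finset.sum_congr rfl (fun z _ => e z), Finset.sum_add_distrib,
        Finset.sum_ite_eq' univ z0, Finset.sum_ite_eq' univ y0]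
      simp
    · simp only [if_neg hy1]
      rw [Finset.sum_ite_eq' univ y (fun _ => (1:ℝ))]
      simp

end Zchan

section Perf
variable {m : ℕ} {p α : ℝ}

lemma ne_ft {m : ℕ} : (fun _ : Fin (2*m+1) => false) ≠ (fun _ : Fin (2*m+1) => true) := by
  intro h
  simpa using congrFun h ⟨0, by omega⟩

lemma jt_y1_true : jointTheta (2*m+1) p α true (fun _ => true) = p*(1-α)^(2*m+1) := by
  rw [jt_true, wt_all_true, Nat.sub_self, pow_zero, mul_one]

lemma jt_y1_false : jointTheta (2*m+1) p α false (fun _ => true) = (1-p)*α^(2*m+1) := by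
  rw [jt_false, wt_all_true, Nat.sub_self, pow_zero, mul_one]

lemma jt_y0_true : jointTheta (2*m+1) p α true (fun _ => false) = p*α^(2*m+1) := by
  rw [jt_true, wt_all_false, pow_zero, Nat.sub_zero, one_mul]

lemma jt_y0_false : jointTheta (2*m+1) p α false (fun _ => false) = (1-p)*(1-α)^(2*m+1) := by
  rw [jt_false, wt_all_false, pow_zero, Nat.sub_zero, one_mul]

lemma pcYZ_Zch (hp : 1/2 ≤ p) (hp1 : p < 1) (h0 : 0 < α) (hh : α < 1/2)
    (ζ : ℝ) (hζ0 : 0 ≤ ζ) (hζ1 : ζ ≤ 1)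
    (hζQ : ζ * (p*(1-α)^(2*m+1) + (1-p)*α^(2*m+1))
      ≤ p*α^(2*m+1) + (1-p)*(1-α)^(2*m+1)) :
    pcYZ (jointTheta (2*m+1) p α)
        (Zch (fun _ => true) (fun _ => false) ζ)
      = 1 - ζ * (p*(1-α)^(2*m+1) + (1-p)*α^(2*m+1)) := by
  set P := jointTheta (2*m+1) p α with hP
  set y1 : Fin (2*m+1) → Bool := fun _ => true with hy1d
  set y0 : Fin (2*m+1) → Bool := fun _ => false with hy0d
  have hne : y0 ≠ y1 := ne_ft
  set Q : (Fin (2*m+1) → Bool) → ℝ := fun y => ∑ x, P x y with hQd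
  have hQb : ∀ y, Q y = P true y + P false y := fun y => by
    rw [hQd]; exact Fintype.sum_bool _
  have hQnn : ∀ y, 0 ≤ Q y := fun y => by
    rw [hQb]
    have := jt_nonneg (m := m) hp hp1 h0 hh true y
    have := jt_nonneg (m := m) hp hp1 h0 hh false y
    rw [hP]; linarith
  have hQ1 : Q y1 = p*(1-α)^(2*m+1) + (1-p)*α^(2*m+1) := by
    rw [hQb, hP, hy1d, jt_y1_true, jt_y1_false]
  have hQ0 : Q y0 = p*α^(2*m+1) + (1-p)*(1-α)^(2*m+1) := by
    rw [hQb, hP, hy0d, jt_y0_true, jt_y0_false]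
  have hZval : ∀ y z : Fin (2*m+1) → Bool, Zch y1 y0 ζ y z =
      if y = y1 then (if z = y0 then ζ else if z = y1 then 1 - ζ else 0)
      else (if z = y then 1 else 0) := fun y z => rfl
  have hvz : ∀ z : Fin (2*m+1) → Bool, z ≠ y1 → Zch y1 y0 ζ z z = 1 := by
    intro z hz
    rw [hZval, if_neg hz, if_pos rfl]
  have hv1 : Zch y1 y0 ζ y1 y1 = 1 - ζ := by
    rw [hZval, if_pos rfl, if_neg hne.symm, if_pos rfl]
  have hG : ∀ z, z ≠ y1 → (⨆ y, Q y * Zch y1 y0 ζ y z) = Q z := by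
    intro z hz
    have := isup_eq (fun y => Q y * Zch y1 y0 ζ y z) z ?_
    · rw [this, hvz z hz, mul_one]
    · intro u
      rw [hvz z hz, mul_one]
      by_cases hu : u = y1
      · rw [hZval, if_pos hu]
        by_cases hz0 : z = y0
        · rw [if_pos hz0, hz0]
          calc Q u * ζ = ζ * Q y1 := by rw [hu]; ring
            _ ≤ Q y0 := by rw [hQ1, hQ0]; exact hζQ
        · rw [if_neg hz0, if_neg hz, mul_zero]
          exact hQnn z
      · rw [hZval, if_neg hu]
        by_cases hzu : z = u
        · rw [if_pos hzu, mul_one, hzu]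
        · rw [if_neg hzu, mul_zero]
          exact hQnn z
  have hG1 : (⨆ y, Q y * Zch y1 y0 ζ y y1) = (1-ζ) * Q y1 := by
    have := isup_eq (fun y => Q y * Zch y1 y0 ζ y y1) y1 ?_
    · rw [this, hv1]; ring
    · intro u
      rw [hv1]
      by_cases hu : u = y1
      · rw [hu, hv1]
      · rw [hZval, if_neg hu, if_neg (fun h => hu h.symm), mul_zero]
        nlinarith [hQnn y1]
  show (∑ z, ⨆ y, Q y * Zch y1 y0 ζ y z) = _
  rw [sum_one_pt (fun z => ⨆ y, Q y * Zch y1 y0 ζ y z) Q y1 hG]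
  have hsQ : ∑ z, Q z = 1 := sum_QY (m := m) hp hp1 h0 hh
  rw [hsQ, hG1, hQ1]
  ring

lemma pcXZ_Zch (hp : 1/2 ≤ p) (hp1 : p < 1) (h0 : 0 < α) (hh : α < 1/2)
    (hnt : α * p < (1 - α) * (1 - p))
    (ζ : ℝ) (hζ0 : 0 ≤ ζ) (hζ1 : ζ ≤ 1)
    (hζe : ζ * (p*(1-α)^(2*m+1) - (1-p)*α^(2*m+1))
      ≤ (1-p)*(1-α)^(2*m+1) - p*α^(2*m+1)) :
    pcXZ (jointTheta (2*m+1) p α)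
        (Zch (fun _ => true) (fun _ => false) ζ)
      = (∑ y, ⨆ t, jointTheta (2*m+1) p α t y)
        - ζ * (p*(1-α)^(2*m+1) - (1-p)*α^(2*m+1)) := by
  set P := jointTheta (2*m+1) p α with hP
  set y1 : Fin (2*m+1) → Bool := fun _ => true with hy1d
  set y0 : Fin (2*m+1) → Bool := fun _ => false with hy0d
  have hne : y0 ≠ y1 := ne_ft
  have hZval : ∀ y z : Fin (2*m+1) → Bool, Zch y1 y0 ζ y z =
      if y = y1 then (if z = y0 then ζ else if z = y1 then 1 - ζ else 0)
      else (if z = y then 1 else 0) := fun y z => rfl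
  have hv1 : Zch y1 y0 ζ y1 y1 = 1 - ζ := by
    rw [hZval, if_pos rfl, if_neg hne.symm, if_pos rfl]
  have hcolg : ∀ (t : Bool) z, z ≠ y1 → z ≠ y0 →
      ∑ y, P t y * Zch y1 y0 ζ y z = P t z := by
    intro t z hz1 hz0
    have e : ∀ y, P t y * Zch y1 y0 ζ y z = (if y = z then P t y else 0) := by
      intro y
      rw [hZval]
      by_cases hy : y = y1
      · rw [if_pos hy, if_neg hz0, if_neg hz1, mul_zero,
          if_neg (by rw [hy]; exact fun h => hz1 h.symm)]
      · rw [if_neg hy]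
        by_cases hzy : z = y
        · rw [if_pos hzy, mul_one, if_pos hzy.symm]
        · rw [if_neg hzy, mul_zero, if_neg (fun h => hzy h.symm)]
    rw [Finset.sum_congr rfl (fun y _ => e y), Finset.sum_ite_eq' univ z (P t)]
    simp
  have hcol1 : ∀ t : Bool, ∑ y, P t y * Zch y1 y0 ζ y y1 = (1-ζ) * P t y1 := by
    intro t
    have e : ∀ y, P t y * Zch y1 y0 ζ y y1
        = (if y = y1 then (1-ζ) * P t y1 else 0) := by
      intro y
      by_cases hy : y = y1
      · rw [if_pos hy, hy, hv1]; ring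
      · rw [hZval, if_neg hy, if_neg (fun h => hy h.symm), mul_zero, if_neg hy]
    rw [Finset.sum_congr rfl (fun y _ => e y),
      Finset.sum_ite_eq' univ y1 (fun _ => (1-ζ) * P t y1)]
    simp
  have hcol0 : ∀ t : Bool, ∑ y, P t y * Zch y1 y0 ζ y y0 = P t y0 + ζ * P t y1 := by
    intro t
    have e : ∀ y, P t y * Zch y1 y0 ζ y y0
        = (if y = y0 then P t y0 else 0) + (if y = y1 then ζ * P t y1 else 0) := by
      intro y
      rw [hZval]
      by_cases hy : y = y1
      · rw [if_pos hy, if_pos rfl, if_neg (by rw [hy]; exact hne.symm), if_pos hy, hy]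
        ring
      · rw [if_neg hy, if_neg hy, add_zero]
        by_cases hy0 : y = y0
        · rw [if_pos hy0, if_pos hy0.symm, mul_one, hy0]
        · rw [if_neg hy0, if_neg (fun h => hy0 h.symm), mul_zero]
    rw [Finset.sum_congr rfl (fun y _ => e y), Finset.sum_add_distrib,
      Finset.sum_ite_eq' univ y0 (fun _ => P t y0),
      Finset.sum_ite_eq' univ y1 (fun _ => ζ * P t y1)]
    simp
  have hdp : (1-p)*α^(2*m+1) < p*(1-α)^(2*m+1) :=
    dpos hp hp1 h0 hh (2*m+1) (by omega)
  have hH1 : (⨆ t, ∑ y, P t y * Zch y1 y0 ζ y y1) = (1-ζ) * (p*(1-α)^(2*m+1)) := by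
    rw [iSup_congr hcol1, bsup]
    rw [hP, jt_y1_true, jt_y1_false]
    rw [max_eq_left (by nlinarith)]
  have hH0 : (⨆ t, ∑ y, P t y * Zch y1 y0 ζ y y0)
      = (1-p)*(1-α)^(2*m+1) + ζ * ((1-p)*α^(2*m+1)) := by
    rw [iSup_congr hcol0, bsup]
    rw [hP, jt_y1_true, jt_y1_false, jt_y0_true, jt_y0_false]
    rw [max_eq_right (by nlinarith)]
  have hM0 : (⨆ t, P t y0) = (1-p)*(1-α)^(2*m+1) := by
    rw [hP, hy0d, sup_jt hp hp1 h0 hh hnt, wt_all_false, if_pos (Nat.zero_le m),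
      pow_zero, one_mul, Nat.sub_zero]
  have hM1 : (⨆ t, P t y1) = p*(1-α)^(2*m+1) := by
    rw [hP, hy1d, sup_jt hp hp1 h0 hh hnt, wt_all_true, if_neg (by omega),
      Nat.sub_self, pow_zero, mul_one]
  show (∑ z, ⨆ t, ∑ y, P t y * Zch y1 y0 ζ y z) = _
  rw [sum_two_pt (fun z => ⨆ t, ∑ y, P t y * Zch y1 y0 ζ y z)
    (fun z => ⨆ t, P t z) y0 y1 hne
    (fun z hz0 hz1 => iSup_congr (fun t => hcolg t z hz1 hz0))]
  rw [hH0, hH1, hM0, hM1]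
  ring

end Perf

section Converse
variable {m : ℕ} {p α : ℝ}

lemma converse (hp : 1/2 ≤ p) (hp1 : p < 1) (h0 : 0 < α) (hh : α < 1/2)
    (hnt : α * p < (1 - α) * (1 - p))
    (F : (Fin (2*m+1) → Bool) → (Fin (2*m+1) → Bool) → ℝ) (hF : IsChannel F) :
    (p*(1-α)^(2*m+1) + (1-p)*α^(2*m+1)) *
        ((∑ y, ⨆ t, jointTheta (2*m+1) p α t y) - pcXZ (jointTheta (2*m+1) p α) F)
      ≤ (p*(1-α)^(2*m+1) - (1-p)*α^(2*m+1)) *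
        (1 - pcYZ (jointTheta (2*m+1) p α) F) := by
  set P := jointTheta (2*m+1) p α with hP
  set c : ℝ := p*(1-α)^(2*m+1) + (1-p)*α^(2*m+1) with hcd
  set d : ℝ := p*(1-α)^(2*m+1) - (1-p)*α^(2*m+1) with hdd
  set Q : (Fin (2*m+1) → Bool) → ℝ := fun y => ∑ x, P x y with hQd
  set M : (Fin (2*m+1) → Bool) → ℝ := fun y => ⨆ t, P t y with hMd
  have hQb : ∀ y, Q y = P true y + P false y := fun y => Fintype.sum_bool _
  have hdpos : 0 < d := by
    have := dpos hp hp1 h0 hh (2*m+1) (by omega)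
    rw [hdd]; linarith
  have hcpos : 0 < c := by
    have h1 : (0:ℝ) < p := by linarith
    have h2 : (0:ℝ) < 1 - p := by linarith
    have h3 : (0:ℝ) < 1 - α := by linarith
    rw [hcd]
    have := pow_pos h3 (2*m+1)
    have := pow_pos h0 (2*m+1)
    nlinarith
  -- key per-column inequality
  have key_col : ∀ z, c * ((∑ y, M y * F y z) - ⨆ t, ∑ y, P t y * F y z)
      ≤ d * ((∑ y, Q y * F y z) - ⨆ y, Q y * F y z) := by
    intro z
    obtain ⟨yh, -, hyh⟩ := Finset.exists_max_image univ (fun y => Q y * F y z) univ_nonempty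
    have hsup : (⨆ y, Q y * F y z) = Q yh * F yh z :=
      isup_eq _ yh (fun u => hyh u (mem_univ u))
    obtain ⟨th, hMth⟩ : ∃ th : Bool, M yh = P th yh := by
      by_cases hw : wt yh ≤ m
      · refine ⟨false, ?_⟩
        show (⨆ t, P t yh) = P false yh
        rw [bsup]
        apply max_eq_right
        rw [hP, jt_true, jt_false]
        exact cmp_low hp hp1 h0 hh hnt hw
      · refine ⟨true, ?_⟩
        show (⨆ t, P t yh) = P true yh
        rw [bsup]
        apply max_eq_left
        rw [hP, jt_true, jt_false]
        exact cmp_high hp hp1 h0 hh (by omega) (wt_le yh)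
    have hts : ∑ y, P th y * F y z ≤ ⨆ t, ∑ y, P t y * F y z :=
      le_ciSup (f := fun t => ∑ y, P t y * F y z)
        (Set.finite_range _).bddAbove th
    have hkey : ∀ y, c * ((M y - P th y) * F y z) ≤ d * (Q y * F y z) := by
      intro y
      have hF0 : 0 ≤ F y z := hF.1 y z
      have base : (M y - P th y) * c ≤ Q y * d := by
        have hnn := jt_nonneg (m := m) hp hp1 h0 hh true y
        have hnn' := jt_nonneg (m := m) hp hp1 h0 hh false y
        have hKI := keyineq (m := m) (w := wt y) hp hp1 h0 hh (wt_le y)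
        have hMy : M y = max (P true y) (P false y) := bsup _
        rw [hQb, hMy, hcd, hdd, hP, jt_true, jt_false]
        have hnn2 : (0:ℝ) ≤ (p*((1-α)^(wt y) * α^(2*m+1-wt y))
              + (1-p)*(α^(wt y) * (1-α)^(2*m+1-wt y)))
              * (p*(1-α)^(2*m+1) - (1-p)*α^(2*m+1)) := by
          have := dpos hp hp1 h0 hh (2*m+1) (by omega)
          rw [jt_true] at hnn
          rw [jt_false] at hnn'
          apply mul_nonneg (by linarith) (by linarith)
        cases th
        · rw [jt_false]
          rcases max_cases (p*((1-α)^(wt y) * α^(2*m+1-wt y)))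
              ((1-p)*(α^(wt y) * (1-α)^(2*m+1-wt y))) with ⟨he, hge⟩ | ⟨he, hge⟩ <;> rw [he]
          · exact hKI.1
          · rw [sub_self, zero_mul]
            exact hnn2
        · rw [jt_true]
          rcases max_cases (p*((1-α)^(wt y) * α^(2*m+1-wt y)))
              ((1-p)*(α^(wt y) * (1-α)^(2*m+1-wt y))) with ⟨he, hge⟩ | ⟨he, hge⟩ <;> rw [he]
          · rw [sub_self, zero_mul]
            exact hnn2
          · exact hKI.2
      calc c * ((M y - P th y) * F y z) = ((M y - P th y) * c) * F y z := by ring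
        _ ≤ (Q y * d) * F y z := mul_le_mul_of_nonneg_right base hF0
        _ = d * (Q y * F y z) := by ring
    calc c * ((∑ y, M y * F y z) - ⨆ t, ∑ y, P t y * F y z)
        ≤ c * ((∑ y, M y * F y z) - ∑ y, P th y * F y z) := by
          apply mul_le_mul_of_nonneg_left _ hcpos.le
          linarith
      _ = ∑ y, c * ((M y - P th y) * F y z) := by
          rw [← Finset.sum_sub_distrib, Finset.mul_sum]
          exact Finset.sum_congr rfl (fun y _ => by ring)
      _ = (∑ y ∈ univ.erase yh, c * ((M y - P th y) * F y z))
          + c * ((M yh - P th yh) * F yh z) :=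
          (Finset.sum_erase_add _ _ (mem_univ yh)).symm
      _ = ∑ y ∈ univ.erase yh, c * ((M y - P th y) * F y z) := by
          rw [hMth, sub_self, zero_mul, mul_zero, add_zero]
      _ ≤ ∑ y ∈ univ.erase yh, d * (Q y * F y z) :=
          Finset.sum_le_sum (fun y _ => hkey y)
      _ = (∑ y, d * (Q y * F y z)) - d * (Q yh * F yh z) := by
          rw [← Finset.sum_erase_add univ _ (mem_univ yh)]
          ring
      _ = d * ((∑ y, Q y * F y z) - ⨆ y, Q y * F y z) := by
          rw [hsup, mul_sub, Finset.mul_sum]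
  have total := Finset.sum_le_sum (fun z (_ : z ∈ univ) => key_col z)
  have hA : ∑ z, ∑ y, M y * F y z = ∑ y, M y := by
    rw [Finset.sum_comm]
    refine Finset.sum_congr rfl (fun y _ => ?_)
    rw [← Finset.mul_sum, hF.2 y, mul_one]
  have hB : ∑ z, ∑ y, Q y * F y z = 1 := by
    rw [Finset.sum_comm]
    have : ∀ y : Fin (2*m+1) → Bool, ∑ z, Q y * F y z = Q y := fun y => by
      rw [← Finset.mul_sum, hF.2 y, mul_one]
    rw [Finset.sum_congr rfl (fun y _ => this y)]
    exact sum_QY (m := m) hp hp1 h0 hh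
  have e1 : ∑ z, c * ((∑ y, M y * F y z) - ⨆ t, ∑ y, P t y * F y z)
      = c * ((∑ y, M y) - pcXZ P F) := by
    rw [← Finset.mul_sum, Finset.sum_sub_distrib, hA]
    rfl
  have e2 : ∑ z, d * ((∑ y, Q y * F y z) - ⨆ y, Q y * F y z)
      = d * (1 - pcYZ P F) := by
    rw [← Finset.mul_sum, Finset.sum_sub_distrib, hB]
    rfl
  rw [e1, e2] at total
  exact total

end Converse

/-- Proposition 3: learning from a private distribution, odd
`n = 2m+1`. Here `P_c(θ|Y^n) = T = (1−α)^n Σ_{k=0}^{(n−1)/2} C(n,k)(α/(1−α))^k` and,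
in the high-utility regime, the maximum of `P_c(Y^n|Z^n)` over channels with
`P_c(θ|Z^n) ≤ ε` equals `1 − ζ(ε)(p(1−α)^n + (1−p)α^n)`, attained by the `2^n`-ary
Z-channel `Z_n(ζ(ε))`. -/
theorem private_parameter_high_utility (m : ℕ) (p α : ℝ)
    (hp : p ∈ Set.Ico (1 / 2 : ℝ) 1) (hα : α ∈ Set.Ioo (0 : ℝ) (1 / 2))
    (hnt : α * p < (1 - α) * (1 - p))
    (hlt : p < ∑ y, ⨆ t, jointTheta (2 * m + 1) p α t y) :
    (∑ y, ⨆ t, jointTheta (2 * m + 1) p α t y) =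
      (1 - α) ^ (2 * m + 1) *
        ∑ k ∈ Finset.range (m + 1),
          (Nat.choose (2 * m + 1) k : ℝ) * (α / (1 - α)) ^ k ∧
    (let T : ℝ := (1 - α) ^ (2 * m + 1) *
        ∑ k ∈ Finset.range (m + 1),
          (Nat.choose (2 * m + 1) k : ℝ) * (α / (1 - α)) ^ k
     ∃ εL < T, ∀ ε ∈ Set.Icc εL T,
      let ζ : ℝ := (T - ε) /
        (p * (1 - α) ^ (2 * m + 1) - (1 - p) * α ^ (2 * m + 1))
      let Z := Zch (fun _ : Fin (2 * m + 1) => true) (fun _ : Fin (2 * m + 1) => false) ζ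
      sSup {u | ∃ F : (Fin (2 * m + 1) → Bool) → (Fin (2 * m + 1) → Bool) → ℝ,
          IsChannel F ∧ pcXZ (jointTheta (2 * m + 1) p α) F ≤ ε ∧
          u = pcYZ (jointTheta (2 * m + 1) p α) F} =
        1 - ζ * (p * (1 - α) ^ (2 * m + 1) + (1 - p) * α ^ (2 * m + 1)) ∧
      (IsChannel Z ∧ pcXZ (jointTheta (2 * m + 1) p α) Z ≤ ε ∧
        pcYZ (jointTheta (2 * m + 1) p α) Z =
          1 - ζ * (p * (1 - α) ^ (2 * m + 1) + (1 - p) * α ^ (2 * m + 1)))) := by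
  obtain ⟨hp2, hp1⟩ := hp
  obtain ⟨h0, hh⟩ := hα
  have part1 : (∑ y, ⨆ t, jointTheta (2*m+1) p α t y)
      = (1-α)^(2*m+1) * ∑ k ∈ Finset.range (m+1),
          ((2*m+1).choose k : ℝ) * (α/(1-α))^k := by
    rw [Tval hp2 hp1 h0 hh hnt, Finset.mul_sum]
    refine Finset.sum_congr rfl (fun k hk => ?_)
    rw [Finset.mem_range] at hk
    have ha : (0:ℝ) < 1 - α := by linarith
    have e : (1-α)^(2*m+1) = (1-α)^k * (1-α)^(2*m+1-k) := by
      rw [← pow_add]; congr 1; omega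
    rw [e, div_pow]
    field_simp
  refine ⟨part1, ?_⟩
  intro T
  have hTdef : T = (1-α)^(2*m+1) * ∑ k ∈ Finset.range (m+1),
      ((2*m+1).choose k : ℝ) * (α/(1-α))^k := rfl
  have hTT : (∑ y, ⨆ t, jointTheta (2*m+1) p α t y) = T := by rw [hTdef]; exact part1
  have hd : (0:ℝ) < p*(1-α)^(2*m+1) - (1-p)*α^(2*m+1) := by
    have := dpos hp2 hp1 h0 hh (2*m+1) (by omega)
    linarith
  have he : (0:ℝ) < (1-p)*(1-α)^(2*m+1) - p*α^(2*m+1) := by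
    have t1 : (α*p)*α^(2*m) < ((1-α)*(1-p))*α^(2*m) :=
      mul_lt_mul_of_pos_right hnt (pow_pos h0 (2*m))
    have t2 : ((1-α)*(1-p))*α^(2*m) ≤ ((1-α)*(1-p))*(1-α)^(2*m) := by
      apply mul_le_mul_of_nonneg_left (pow_le_pow_left₀ h0.le (by linarith) (2*m))
      nlinarith
    have e1 : p*α^(2*m+1) = (α*p)*α^(2*m) := by rw [pow_succ]; ring
    have e2 : (1-p)*(1-α)^(2*m+1) = ((1-α)*(1-p))*(1-α)^(2*m) := by rw [pow_succ]; ring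
    rw [e1, e2]; linarith
  have hapos : (0:ℝ) < (1-α)^(2*m+1) := pow_pos (by linarith) _
  have hbpos : (0:ℝ) < α^(2*m+1) := pow_pos h0 _
  have hc : (0:ℝ) < p*(1-α)^(2*m+1) + (1-p)*α^(2*m+1) := by nlinarith
  have hQ0 : (0:ℝ) < p*α^(2*m+1) + (1-p)*(1-α)^(2*m+1) := by nlinarith
  set δ : ℝ := min 1 (min
    ((p*α^(2*m+1) + (1-p)*(1-α)^(2*m+1)) / (p*(1-α)^(2*m+1) + (1-p)*α^(2*m+1)))
    (((1-p)*(1-α)^(2*m+1) - p*α^(2*m+1)) / (p*(1-α)^(2*m+1) - (1-p)*α^(2*m+1)))) with hδdef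
  have hδ : 0 < δ :=
    lt_min one_pos (lt_min (div_pos hQ0 hc) (div_pos he hd))
  refine ⟨T - (p*(1-α)^(2*m+1) - (1-p)*α^(2*m+1)) * δ,
    by nlinarith [mul_pos hd hδ], ?_⟩
  intro ε hε
  intro ζ Z
  have hζdef : ζ = (T - ε)/(p*(1-α)^(2*m+1) - (1-p)*α^(2*m+1)) := rfl
  have hZdef : Z = Zch (fun _ : Fin (2*m+1) => true) (fun _ : Fin (2*m+1) => false) ζ := rfl
  obtain ⟨hε1, hε2⟩ := hε
  have hζ0 : 0 ≤ ζ := by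
    rw [hζdef]
    exact div_nonneg (by linarith) hd.le
  have hζδ : ζ ≤ δ := by
    rw [hζdef, div_le_iff₀ hd]
    nlinarith [hε1]
  have hζ1 : ζ ≤ 1 := le_trans hζδ (min_le_left _ _)
  have hζQ : ζ * (p*(1-α)^(2*m+1) + (1-p)*α^(2*m+1))
      ≤ p*α^(2*m+1) + (1-p)*(1-α)^(2*m+1) := by
    have h2 : ζ ≤ (p*α^(2*m+1) + (1-p)*(1-α)^(2*m+1))
        / (p*(1-α)^(2*m+1) + (1-p)*α^(2*m+1)) :=
      le_trans hζδ (le_trans (min_le_right _ _) (min_le_left _ _))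
    exact (le_div_iff₀ hc).mp h2
  have hζe : ζ * (p*(1-α)^(2*m+1) - (1-p)*α^(2*m+1))
      ≤ (1-p)*(1-α)^(2*m+1) - p*α^(2*m+1) := by
    have h2 : ζ ≤ ((1-p)*(1-α)^(2*m+1) - p*α^(2*m+1))
        / (p*(1-α)^(2*m+1) - (1-p)*α^(2*m+1)) :=
      le_trans hζδ (le_trans (min_le_right _ _) (min_le_right _ _))
    exact (le_div_iff₀ hd).mp h2
  have hζd : ζ * (p*(1-α)^(2*m+1) - (1-p)*α^(2*m+1)) = T - ε := by
    rw [hζdef]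
    exact div_mul_cancel₀ _ hd.ne'
  have hZc : IsChannel Z := by
    rw [hZdef]
    exact Zch_isChannel _ _ ne_ft ζ hζ0 hζ1
  have hXZ : pcXZ (jointTheta (2*m+1) p α) Z = ε := by
    rw [hZdef, pcXZ_Zch hp2 hp1 h0 hh hnt ζ hζ0 hζ1 hζe, hTT, hζd]
    ring
  have hYZ : pcYZ (jointTheta (2*m+1) p α) Z
      = 1 - ζ * (p*(1-α)^(2*m+1) + (1-p)*α^(2*m+1)) := by
    rw [hZdef]
    exact pcYZ_Zch hp2 hp1 h0 hh ζ hζ0 hζ1 hζQ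
  have hub : ∀ u ∈ {u | ∃ F : (Fin (2*m+1) → Bool) → (Fin (2*m+1) → Bool) → ℝ,
      IsChannel F ∧ pcXZ (jointTheta (2*m+1) p α) F ≤ ε ∧
      u = pcYZ (jointTheta (2*m+1) p α) F},
      u ≤ 1 - ζ * (p*(1-α)^(2*m+1) + (1-p)*α^(2*m+1)) := by
    rintro u ⟨F, hFc, hFε, rfl⟩
    have hconv := converse hp2 hp1 h0 hh hnt F hFc
    rw [hTT] at hconv
    have h1 : (p*(1-α)^(2*m+1) + (1-p)*α^(2*m+1)) * (T - ε)
        ≤ (p*(1-α)^(2*m+1) - (1-p)*α^(2*m+1))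
          * (1 - pcYZ (jointTheta (2*m+1) p α) F) := by
      refine le_trans ?_ hconv
      apply mul_le_mul_of_nonneg_left _ hc.le
      linarith
    have e3 : (p*(1-α)^(2*m+1) + (1-p)*α^(2*m+1)) * (T - ε)
        = (p*(1-α)^(2*m+1) - (1-p)*α^(2*m+1))
          * (ζ * (p*(1-α)^(2*m+1) + (1-p)*α^(2*m+1))) := by
      rw [← hζd]; ring
    rw [e3] at h1
    have h2 := (mul_le_mul_iff_right₀ hd).mp h1
    linarith
  have hmem : (1 - ζ * (p*(1-α)^(2*m+1) + (1-p)*α^(2*m+1)))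
      ∈ {u | ∃ F : (Fin (2*m+1) → Bool) → (Fin (2*m+1) → Bool) → ℝ,
        IsChannel F ∧ pcXZ (jointTheta (2*m+1) p α) F ≤ ε ∧
        u = pcYZ (jointTheta (2*m+1) p α) F} :=
    ⟨Z, hZc, le_of_eq hXZ, hYZ.symm⟩
  exact ⟨le_antisymm (csSup_le ⟨_, hmem⟩ hub)
      (le_csSup ⟨_, fun x hx => hub x hx⟩ hmem), hZc, le_of_eq hXZ, hYZ⟩
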